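/- arXiv:1505.01428 — 5 statements merged into one kernel-verified Lean document; each statement's English description precedes it below -/
import Mathlib

section
/- If ĝ is a left eigenvector of m₁ with eigenvalue λ_g (i.e. Σ_{(a,j)} ĝ(a,j) m₁((a,j),(b,k)) = λ_g ĝ(b,k) for all (b,k)), and g(a) := Σ_{j=1}^{|θ(a)|} ĝ(a,j), then for all (b,k) ∈ 𝒳 one has λ_g ĝ(b,k) = g(θ(b)_k); moreover g is a left eigenvector of M with eigenvalue λ_g, i.e. Σ_a g(a) M_{a,b} = λ_g g(b). -/
open scoped BigOperators

lemma aux1 {A : Type*} [Fintype A] [DecidableEq A] (f : A → ℂ) :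
    ∀ l : List A, ∑ j : Fin l.length, f (l.get j) = ∑ a : A, f a * (l.count a : ℂ)
  | [] => by simp
  | c :: l => by
    rw [show ∑ j : Fin (c :: l).length, f ((c :: l).get j)
        = f c + ∑ j : Fin l.length, f (l.get j) from Fin.sum_univ_succ _,
      aux1 f l]
    simp only [List.count_cons]
    push_cast
    rw [Finset.sum_congr rfl (fun a _ => mul_add (f a) _ _), Finset.sum_add_distrib]
    simp [mul_ite, Finset.sum_ite_eq, add_comm]

/-- If `gh` (ĝ) is a left eigenvector of `m₁` with eigenvalue `λ_g`, and
`g(a) := Σ_{j=1}^{|θ(a)|} ĝ(a,j)`, then `λ_g ĝ(b,k) = g(θ(b)_k)` for all `(b,k) ∈ 𝒳`,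
and `g` is a left eigenvector of the substitution matrix `M` with eigenvalue `λ_g`. -/
theorem stmt3 {A : Type*} [Fintype A] [DecidableEq A]
    (θ : A → List A) (gh : (Σ a : A, Fin (θ a).length) → ℂ) (lg : ℂ)
    (hleft : ∀ y : Σ a : A, Fin (θ a).length,
      ∑ x : Σ a : A, Fin (θ a).length,
        gh x * (if (θ y.1).get y.2 = x.1 then 1 else 0) = lg * gh y) :
    (∀ y : Σ a : A, Fin (θ a).length,
      lg * gh y = ∑ j : Fin (θ ((θ y.1).get y.2)).length, gh ⟨(θ y.1).get y.2, j⟩) ∧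
    (∀ b : A,
      ∑ a : A, (∑ j : Fin (θ a).length, gh ⟨a, j⟩) * ((θ b).count a : ℂ)
        = lg * ∑ j : Fin (θ b).length, gh ⟨b, j⟩) := by
  have h1 : ∀ y : Σ a : A, Fin (θ a).length,
      lg * gh y = ∑ j : Fin (θ ((θ y.1).get y.2)).length, gh ⟨(θ y.1).get y.2, j⟩ := by
    intro y
    rw [← hleft y, ← Finset.univ_sigma_univ, Finset.sum_sigma]
    simp [mul_ite, Finset.sum_ite_eq]
  refine ⟨h1, fun b => ?_⟩
  rw [← aux1 (fun a => ∑ j : Fin (θ a).length, gh ⟨a, j⟩) (θ b), Finset.mul_sum]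
  exact Finset.sum_congr rfl fun j _ => (h1 ⟨b, j⟩).symm
end

section
/- If the substitution θ is primitive (some power of M has all entries positive), then the matrix m₁ on the state space 𝒳 is primitive: there exists k such that m₁^{k+1} has all entries positive. Specifically if for all c,d the letter c occurs in θ^k(d), then m₁^{k+1}((a,i),(b,j)) ≥ 1 for all (a,i),(b,j) ∈ 𝒳. -/
open scoped BigOperators

private lemma stmt4_aux {A : Type*} [Fintype A] [DecidableEq A]
    (θ : A → List A) :
    ∀ (k : ℕ) (a c : A), a ∈ (fun w : List A => w.flatMap θ)^[k] [c] →
      ∀ x y : Σ a : A, Fin (θ a).length, x.1 = a → (θ y.1).get y.2 = c →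
      1 ≤ ((Matrix.of fun x y : Σ a : A, Fin (θ a).length =>
          if (θ y.1).get y.2 = x.1 then (1 : ℕ) else 0) ^ (k + 1)) x y := by
  intro k
  induction k with
  | zero =>
    intro a c hm x y hx hy
    simp only [Function.iterate_zero, id_eq, List.mem_singleton] at hm
    rw [pow_one]
    simp only [Matrix.of_apply]
    rw [if_pos ((hy.trans hm.symm).trans hx.symm)]
  | succ k ih =>
    intro a c hm x y hx hy
    rw [Function.iterate_succ_apply'] at hm
    simp only [List.mem_flatMap] at hm
    obtain ⟨b, hb, hab⟩ := hm
    obtain ⟨t, ht⟩ := List.get_of_mem hab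
    have h1 := ih b c hb ⟨b, t⟩ y rfl hy
    set M := (Matrix.of fun x y : Σ a : A, Fin (θ a).length =>
          if (θ y.1).get y.2 = x.1 then (1 : ℕ) else 0) with hM
    rw [pow_succ', Matrix.mul_apply]
    refine le_trans ?_ (Finset.single_le_sum
      (f := fun z => M x z * (M ^ (k + 1)) z y)
      (fun i _ => Nat.zero_le _) (Finset.mem_univ (⟨b, t⟩ : Σ a : A, Fin (θ a).length)))
    have h2 : M x ⟨b, t⟩ = 1 := by
      simp only [hM, Matrix.of_apply]
      exact if_pos (ht.trans hx.symm)
    simpa [h2] using h1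

/-- If the substitution `θ` is primitive, the matrix `m₁` on the state space `𝒳` is
primitive: if every letter `c` occurs in `θ^k(d)` for all `d`, then all entries of
`m₁^{k+1}` are at least `1`. -/
theorem stmt4 {A : Type*} [Fintype A] [DecidableEq A]
    (θ : A → List A) (k : ℕ)
    (hprim : ∀ c d : A, c ∈ (fun w : List A => w.flatMap θ)^[k] [d]) :
    ∀ x y : Σ a : A, Fin (θ a).length,
      1 ≤ ((Matrix.of fun x y : Σ a : A, Fin (θ a).length =>
          if (θ y.1).get y.2 = x.1 then (1 : ℕ) else 0) ^ (k + 1)) x y := by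
  intro x y
  exact stmt4_aux θ k x.1 ((θ y.1).get y.2) (hprim _ _) x y rfl rfl
end

section
/- For the substitution-path chain, the product P P* of the forward transition operator and its adjoint is a block matrix indexed by the first letter: (𝔭𝔭*)((a,j),(b,k)) = 0 unless a = b. Consequently each diagonal block (for fixed a ∈ 𝒜) is itself a right-stochastic matrix with all entries positive, and the eigenspace of 𝔭𝔭* for eigenvalue 1 has dimension |𝒜|, spanned by functions of the form (a,j) ↦ h(a) for arbitrary h : 𝒜 → ℂ. -/
open scoped BigOperators

/-- For the substitution-path chain, `𝔭𝔭*` is a block matrix indexed by the first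
letter: it vanishes off the diagonal blocks, each diagonal block is right-stochastic
with positive entries, and the `1`-eigenspace of `𝔭𝔭*` is exactly the space of
functions of the form `(a,j) ↦ h(a)`. -/
theorem stmt7 {A : Type*} [Fintype A] [DecidableEq A]
    (θ : A → List A) (hne : ∀ a : A, θ a ≠ [])
    (hprim : ∃ k : ℕ, ∀ a b : A,
      0 < ((Matrix.of fun a b : A => ((θ b).count a : ℝ)) ^ k) a b)
    (lam : ℝ) (hlam : 0 < lam)
    (ρ σ : (Σ a : A, Fin (θ a).length) → ℝ)
    (hρpos : ∀ x, 0 < ρ x) (hσpos : ∀ x, 0 < σ x)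
    (hright : ∀ x : Σ a : A, Fin (θ a).length,
      ∑ y : Σ a : A, Fin (θ a).length,
        (if (θ y.1).get y.2 = x.1 then (1 : ℝ) else 0) * ρ y = lam * ρ x)
    (hleft : ∀ y : Σ a : A, Fin (θ a).length,
      ∑ x : Σ a : A, Fin (θ a).length,
        σ x * (if (θ y.1).get y.2 = x.1 then (1 : ℝ) else 0) = lam * σ y)
    (p pstar pp : (Σ a : A, Fin (θ a).length) → (Σ a : A, Fin (θ a).length) → ℝ)
    (hp : ∀ x y, p x y = (if (θ y.1).get y.2 = x.1 then (1 : ℝ) else 0) * ρ y / (lam * ρ x))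
    (hpstar : ∀ x y,
      pstar x y = (if (θ x.1).get x.2 = y.1 then (1 : ℝ) else 0) * σ y / (lam * σ x))
    (hpp : ∀ x y, pp x y = ∑ z : Σ a : A, Fin (θ a).length, p x z * pstar z y) :
    (∀ x y : Σ a : A, Fin (θ a).length, x.1 ≠ y.1 → pp x y = 0) ∧
    (∀ x y : Σ a : A, Fin (θ a).length, x.1 = y.1 → 0 < pp x y) ∧
    (∀ x : Σ a : A, Fin (θ a).length, ∑ k : Fin (θ x.1).length, pp x ⟨x.1, k⟩ = 1) ∧
    (∀ h : (Σ a : A, Fin (θ a).length) → ℂ,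
      (∀ x : Σ a : A, Fin (θ a).length,
          ∑ y : Σ a : A, Fin (θ a).length, (pp x y : ℂ) * h y = h x)
        ↔ ∃ g : A → ℂ, ∀ x : Σ a : A, Fin (θ a).length, h x = g x.1) := by
  classical
  have hρlam : ∀ x : (Σ a : A, Fin (θ a).length), 0 < lam * ρ x := fun x => mul_pos hlam (hρpos x)
  have hσlam : ∀ x : (Σ a : A, Fin (θ a).length), 0 < lam * σ x := fun x => mul_pos hlam (hσpos x)
  have hite : ∀ (c : Prop) [Decidable c], (0:ℝ) ≤ if c then 1 else 0 := by
    intro c _; split <;> norm_num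
  have hp_nonneg : ∀ x y : (Σ a : A, Fin (θ a).length), 0 ≤ p x y := by
    intro x y; rw [hp]
    exact div_nonneg (mul_nonneg (hite _) (hρpos y).le) (hρlam x).le
  have hpstar_nonneg : ∀ x y : (Σ a : A, Fin (θ a).length), 0 ≤ pstar x y := by
    intro x y; rw [hpstar]
    exact div_nonneg (mul_nonneg (hite _) (hσpos y).le) (hσlam x).le
  have hrow_p : ∀ x : (Σ a : A, Fin (θ a).length), ∑ z : (Σ a : A, Fin (θ a).length), p x z = 1 := by
    intro x
    have h1 : ∑ z : (Σ a : A, Fin (θ a).length), p x z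
        = (∑ z : (Σ a : A, Fin (θ a).length), (if (θ z.1).get z.2 = x.1 then (1:ℝ) else 0) * ρ z) / (lam * ρ x) := by
      rw [Finset.sum_div]; exact Finset.sum_congr rfl fun z _ => hp x z
    rw [h1, hright x, div_self (hρlam x).ne']
  have hrow_pstar : ∀ z : (Σ a : A, Fin (θ a).length), ∑ y : (Σ a : A, Fin (θ a).length), pstar z y = 1 := by
    intro z
    have h1 : ∑ y : (Σ a : A, Fin (θ a).length), pstar z y
        = (∑ y : (Σ a : A, Fin (θ a).length), σ y * (if (θ z.1).get z.2 = y.1 then (1:ℝ) else 0)) / (lam * σ z) := by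
      rw [Finset.sum_div]
      exact Finset.sum_congr rfl fun y _ => by rw [hpstar, mul_comm (σ y)]
    rw [h1, hleft z, div_self (hσlam z).ne']
  have hoff : ∀ x y : (Σ a : A, Fin (θ a).length), x.1 ≠ y.1 → pp x y = 0 := by
    intro x y hxy
    rw [hpp]
    refine Finset.sum_eq_zero fun z _ => ?_
    rw [hp, hpstar]
    by_cases h1 : (θ z.1).get z.2 = x.1
    · by_cases h2 : (θ z.1).get z.2 = y.1
      · exact absurd (h1.symm.trans h2) hxy
      · rw [if_neg h2, zero_mul, zero_div, mul_zero]
    · rw [if_neg h1, zero_mul, zero_div, zero_mul]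
  have hex : ∀ x : (Σ a : A, Fin (θ a).length), ∃ z : (Σ a : A, Fin (θ a).length), (θ z.1).get z.2 = x.1 := by
    intro x
    by_contra hcon
    push_neg at hcon
    have h0 := hright x
    rw [Finset.sum_eq_zero (fun z _ => by rw [if_neg (hcon z), zero_mul])] at h0
    exact absurd h0.symm (hρlam x).ne'
  have hdiag : ∀ x y : (Σ a : A, Fin (θ a).length), x.1 = y.1 → 0 < pp x y := by
    intro x y hxy
    obtain ⟨z, hz⟩ := hex x
    rw [hpp]
    refine Finset.sum_pos' (fun w _ => mul_nonneg (hp_nonneg x w) (hpstar_nonneg w y))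
      ⟨z, Finset.mem_univ z, ?_⟩
    rw [hp, hpstar, if_pos hz, if_pos (hz.trans hxy), one_mul, one_mul]
    exact mul_pos (div_pos (hρpos z) (hρlam x)) (div_pos (hσpos y) (hσlam z))
  have hrow_pp : ∀ x : (Σ a : A, Fin (θ a).length), ∑ y : (Σ a : A, Fin (θ a).length), pp x y = 1 := by
    intro x
    calc ∑ y : (Σ a : A, Fin (θ a).length), pp x y = ∑ y : (Σ a : A, Fin (θ a).length), ∑ z : (Σ a : A, Fin (θ a).length), p x z * pstar z y :=
          Finset.sum_congr rfl fun y _ => hpp x y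
      _ = ∑ z : (Σ a : A, Fin (θ a).length), ∑ y : (Σ a : A, Fin (θ a).length), p x z * pstar z y := Finset.sum_comm
      _ = ∑ z : (Σ a : A, Fin (θ a).length), p x z * ∑ y : (Σ a : A, Fin (θ a).length), pstar z y :=
          Finset.sum_congr rfl fun z _ => (Finset.mul_sum _ _ _).symm
      _ = ∑ z : (Σ a : A, Fin (θ a).length), p x z := Finset.sum_congr rfl fun z _ => by rw [hrow_pstar z, mul_one]
      _ = 1 := hrow_p x
  have hblock : ∀ x : (Σ a : A, Fin (θ a).length), ∑ k : Fin (θ x.1).length, pp x ⟨x.1, k⟩ = 1 := by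
    intro x
    have h1 : ∑ y : (Σ a : A, Fin (θ a).length), pp x y = ∑ a : A, ∑ k : Fin (θ a).length, pp x ⟨a, k⟩ := by
      rw [← Finset.univ_sigma_univ, Finset.sum_sigma]
    rw [hrow_pp x] at h1
    rw [Finset.sum_eq_single_of_mem x.1 (Finset.mem_univ _)
      (fun b _ hb => Finset.sum_eq_zero fun k _ => hoff x ⟨b, k⟩ (Ne.symm hb))] at h1
    exact h1.symm
  refine ⟨hoff, hdiag, hblock, ?_⟩
  intro h
  constructor
  · intro heig
    have key : ∀ f : (Σ a : A, Fin (θ a).length) → ℝ, (∀ x : (Σ a : A, Fin (θ a).length), ∑ y : (Σ a : A, Fin (θ a).length), pp x y * f y = f x) →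
        ∀ x y : (Σ a : A, Fin (θ a).length), x.1 = y.1 → f x = f y := by
      intro f hf x y hxy
      have hlen : 0 < (θ x.1).length := List.length_pos_iff.mpr (hne x.1)
      obtain ⟨k₀, -, hk₀⟩ := Finset.exists_max_image (Finset.univ : Finset (Fin (θ x.1).length))
        (fun k => f ⟨x.1, k⟩) ⟨⟨0, hlen⟩, Finset.mem_univ _⟩
      set M := f ⟨x.1, k₀⟩ with hM
      have hall : ∀ y' : (Σ a : A, Fin (θ a).length), y'.1 = x.1 → f y' = M := by
        have heq : ∑ z : (Σ a : A, Fin (θ a).length), pp ⟨x.1, k₀⟩ z * (M - f z) = 0 := by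
          have h1 : ∑ z : (Σ a : A, Fin (θ a).length), pp ⟨x.1, k₀⟩ z * M = M := by
            rw [← Finset.sum_mul, hrow_pp, one_mul]
          have h2 := hf ⟨x.1, k₀⟩
          simp only [mul_sub]
          rw [Finset.sum_sub_distrib, h1, h2, sub_self]
        have hnn : ∀ z ∈ (Finset.univ : Finset (Σ a : A, Fin (θ a).length)), 0 ≤ pp ⟨x.1, k₀⟩ z * (M - f z) := by
          intro z _
          by_cases hz : (⟨x.1, k₀⟩ : (Σ a : A, Fin (θ a).length)).1 = z.1
          · refine mul_nonneg (hdiag _ _ hz).le ?_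
            obtain ⟨a, k⟩ := z
            simp only at hz
            subst hz
            exact sub_nonneg.mpr (hk₀ k (Finset.mem_univ _))
          · rw [hoff _ _ hz, zero_mul]
        have hz0 := (Finset.sum_eq_zero_iff_of_nonneg hnn).mp heq
        intro y' hy'
        have hterm := hz0 y' (Finset.mem_univ _)
        have hpos := hdiag ⟨x.1, k₀⟩ y' hy'.symm
        rcases mul_eq_zero.mp hterm with hc | hc
        · exact absurd hc hpos.ne'
        · linarith [sub_eq_zero.mp hc]
      rw [hall x rfl, hall y hxy.symm]
    have hre : ∀ x : (Σ a : A, Fin (θ a).length), ∑ y : (Σ a : A, Fin (θ a).length), pp x y * (h y).re = (h x).re := by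
      intro x
      have h1 := congrArg Complex.re (heig x)
      rw [Complex.re_sum] at h1
      simpa only [Complex.re_ofReal_mul] using h1
    have him : ∀ x : (Σ a : A, Fin (θ a).length), ∑ y : (Σ a : A, Fin (θ a).length), pp x y * (h y).im = (h x).im := by
      intro x
      have h1 := congrArg Complex.im (heig x)
      rw [Complex.im_sum] at h1
      simpa only [Complex.im_ofReal_mul] using h1
    have hconst : ∀ x y : (Σ a : A, Fin (θ a).length), x.1 = y.1 → h x = h y := fun x y hxy =>
      Complex.ext (key _ hre x y hxy) (key _ him x y hxy)
    refine ⟨fun a => h ⟨a, ⟨0, List.length_pos_iff.mpr (hne a)⟩⟩, fun x => ?_⟩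
    exact hconst x ⟨x.1, ⟨0, List.length_pos_iff.mpr (hne x.1)⟩⟩ rfl
  · rintro ⟨g, hg⟩ x
    have h1 : ∑ y : (Σ a : A, Fin (θ a).length), (pp x y : ℂ) * h y = ∑ y : (Σ a : A, Fin (θ a).length), (pp x y : ℂ) * g x.1 := by
      refine Finset.sum_congr rfl fun y _ => ?_
      rw [hg y]
      by_cases hxy : x.1 = y.1
      · rw [hxy]
      · rw [hoff x y hxy]; simp
    rw [h1, ← Finset.sum_mul]
    have h2 : (∑ y : (Σ a : A, Fin (θ a).length), (pp x y : ℂ)) = 1 := by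
      rw [← Complex.ofReal_sum, hrow_pp x, Complex.ofReal_one]
    rw [h2, one_mul, hg x]
end

section
/- Let p be a primitive right-stochastic matrix on a finite set 𝒳 with invariant measure π, λ ∈ ℂ with |λ| = 1 and λ ≠ 1. Then the operator I − λP on ℂ^𝒳 is invertible, so for any g : 𝒳 → ℂ there is a unique h with g = h − λPh. -/
open scoped BigOperators

private lemma rowsum_pow' {S : Type*} [Fintype S] [DecidableEq S]
    (p : S → S → ℝ) (hrow : ∀ x, ∑ y, p x y = 1) :
    ∀ k x, ∑ y, ((Matrix.of p) ^ k) x y = 1 := by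
  intro k
  induction k with
  | zero => intro x; simp [Matrix.one_apply]
  | succ k ih =>
    intro x
    rw [pow_succ']
    simp only [Matrix.mul_apply, Matrix.of_apply]
    rw [Finset.sum_comm]
    have : ∀ z : S, ∑ y, p x z * ((Matrix.of p) ^ k) z y = p x z := by
      intro z
      rw [← Finset.mul_sum, ih z, mul_one]
    simp_rw [this]
    exact hrow x

private lemma iter_eq' {S : Type*} [Fintype S] [DecidableEq S]
    (p : S → S → ℝ) (lam : ℂ) (h : S → ℂ)
    (heq : ∀ x, h x = lam * ∑ y, (p x y : ℂ) * h y) :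
    ∀ (k : ℕ) (x : S), h x = lam ^ k * ∑ y, ((((Matrix.of p) ^ k) x y : ℝ) : ℂ) * h y := by
  intro k
  induction k with
  | zero =>
    intro x
    simp [Matrix.one_apply, Finset.sum_ite_eq, apply_ite (Complex.ofReal)]
  | succ k ih =>
    intro x
    rw [heq x]
    have : ∀ z : S, h z = lam ^ k * ∑ y, ((((Matrix.of p) ^ k) z y : ℝ) : ℂ) * h y := ih
    calc lam * ∑ y, (p x y : ℂ) * h y
        = lam * ∑ z, (p x z : ℂ) * (lam ^ k * ∑ y, ((((Matrix.of p) ^ k) z y : ℝ) : ℂ) * h y) := by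
          congr 1; exact Finset.sum_congr rfl fun z _ => by rw [← this z]
      _ = lam ^ (k+1) * ∑ z, ∑ y, (p x z : ℂ) * ((((Matrix.of p) ^ k) z y : ℝ) : ℂ) * h y := by
          rw [pow_succ]
          simp_rw [Finset.mul_sum]
          ring_nf
      _ = lam ^ (k+1) * ∑ y, ((((Matrix.of p) ^ (k+1)) x y : ℝ) : ℂ) * h y := by
          congr 1
          rw [Finset.sum_comm]
          refine Finset.sum_congr rfl fun y _ => ?_
          rw [pow_succ']
          simp only [Matrix.mul_apply, Matrix.of_apply]
          push_cast
          rw [Finset.sum_mul]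

private lemma core' {S : Type*} [Fintype S] [DecidableEq S]
    (p : S → S → ℝ)
    (hp : ∀ x y, 0 ≤ p x y) (hrow : ∀ x, ∑ y, p x y = 1)
    (hprim : ∃ k : ℕ, ∀ x y : S, 0 < ((Matrix.of p) ^ k) x y)
    (lam : ℂ) (hlam : ‖lam‖ = 1) (hne : lam ≠ 1)
    (h : S → ℂ) (heq : ∀ x, h x = lam * ∑ y, (p x y : ℂ) * h y) : h = 0 := by
  rcases isEmpty_or_nonempty S with hS | hS
  · funext x; exact isEmptyElim x
  obtain ⟨k, hk⟩ := hprim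
  set q : S → S → ℝ := fun x y => ((Matrix.of p) ^ k) x y with hq
  have hqsum : ∀ x, ∑ y, q x y = 1 := fun x => rowsum_pow' p hrow k x
  have hqpos : ∀ x y, 0 < q x y := hk
  have hK : ∀ x, h x = lam ^ k * ∑ y, ((q x y : ℝ) : ℂ) * h y := fun x => iter_eq' p lam h heq k x
  have hlamne : lam ≠ 0 := by
    intro h0; rw [h0] at hlam; simp at hlam
  have hnormlam : Complex.normSq lam = 1 := by
    rw [← Complex.sq_norm, hlam]; norm_num
  obtain ⟨x0, -, hx0⟩ := Finset.exists_max_image Finset.univ (fun x => Complex.normSq (h x))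
    ⟨Classical.arbitrary S, Finset.mem_univ _⟩
  have hx0max : ∀ y, Complex.normSq (h y) ≤ Complex.normSq (h x0) := fun y => hx0 y (Finset.mem_univ _)
  set c : ℂ := lam⁻¹ ^ k * h x0 with hc
  have hnormc : Complex.normSq c = Complex.normSq (h x0) := by
    rw [hc, map_mul, map_pow, map_inv₀, hnormlam]
    norm_num
  have hsum_c : ∑ y, ((q x0 y : ℝ) : ℂ) * h y = c := by
    have := hK x0
    rw [hc]
    rw [this, ← mul_assoc, ← mul_pow, inv_mul_cancel₀ hlamne, one_pow, one_mul]
  have hvar : ∑ y, q x0 y * Complex.normSq (h y - c) ≤ 0 := by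
    have expand : ∀ y, Complex.normSq (h y - c)
        = Complex.normSq (h y) + Complex.normSq c - 2 * (h y * (starRingEnd ℂ) c).re := by
      intro y; rw [Complex.normSq_sub]
    calc ∑ y, q x0 y * Complex.normSq (h y - c)
        = ∑ y, q x0 y * Complex.normSq (h y)
          + (∑ y, q x0 y) * Complex.normSq c
          - 2 * ((∑ y, ((q x0 y : ℝ) : ℂ) * h y) * (starRingEnd ℂ) c).re := by
          simp_rw [expand, Finset.sum_mul, Complex.re_sum, Finset.mul_sum]
          rw [← Finset.sum_add_distrib, ← Finset.sum_sub_distrib]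
          refine Finset.sum_congr rfl fun y _ => ?_
          have : ((((q x0 y : ℝ) : ℂ)) * h y * (starRingEnd ℂ) c).re
              = q x0 y * (h y * (starRingEnd ℂ) c).re := by
            rw [mul_assoc, Complex.re_ofReal_mul]
          rw [this]; ring
      _ = ∑ y, q x0 y * Complex.normSq (h y) - Complex.normSq c := by
          rw [hqsum, hsum_c, one_mul]
          have : (c * (starRingEnd ℂ) c).re = Complex.normSq c := by
            rw [Complex.mul_conj]; simp
          rw [this]; ring
      _ ≤ ∑ y, q x0 y * Complex.normSq (h x0) - Complex.normSq c := by
          gcongr with y _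
          · exact (hqpos x0 y).le
          · exact hx0max y
      _ = 0 := by rw [← Finset.sum_mul, hqsum, one_mul, hnormc]; ring
  have hconst : ∀ y, h y = c := by
    intro y
    have hterms : ∀ y ∈ Finset.univ, (0:ℝ) ≤ q x0 y * Complex.normSq (h y - c) := fun y _ =>
      mul_nonneg (hqpos x0 y).le (Complex.normSq_nonneg _)
    have hzero := (Finset.sum_eq_zero_iff_of_nonneg hterms).mp
      (le_antisymm hvar (Finset.sum_nonneg hterms))
    have h2 : Complex.normSq (h y - c) = 0 := by
      rcases mul_eq_zero.mp (hzero y (Finset.mem_univ y)) with h' | h'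
      · exact absurd h' (ne_of_gt (hqpos x0 y))
      · exact h'
    exact sub_eq_zero.mp (Complex.normSq_eq_zero.mp h2)
  have hc0 : c = 0 := by
    have := heq (Classical.arbitrary S)
    rw [hconst (Classical.arbitrary S)] at this
    simp_rw [hconst, ← Finset.sum_mul] at this
    rw [show (∑ y, ((p (Classical.arbitrary S) y : ℝ) : ℂ)) = 1 by
      push_cast [← Complex.ofReal_sum]
      exact_mod_cast congrArg (Complex.ofReal) (hrow (Classical.arbitrary S))] at this
    rw [one_mul] at this
    have hfac : c * (1 - lam) = 0 := by ring_nf; linear_combination this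
    rcases mul_eq_zero.mp hfac with h' | h'
    · exact h'
    · exact absurd (by linear_combination -h') hne
  funext y
  rw [hconst y, hc0]; rfl

/-- For a primitive right-stochastic matrix `p` on a finite set and `λ` with `|λ| = 1`,
`λ ≠ 1`, the operator `I − λP` is invertible: for every `g` there is a unique `h` with
`g = h − λPh`. -/
theorem stmt14 {S : Type*} [Fintype S] [DecidableEq S]
    (p : S → S → ℝ)
    (hp : ∀ x y, 0 ≤ p x y) (hrow : ∀ x, ∑ y, p x y = 1)
    (hprim : ∃ k : ℕ, ∀ x y : S, 0 < ((Matrix.of p) ^ k) x y)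
    (lam : ℂ) (hlam : ‖lam‖ = 1) (hne : lam ≠ 1) :
    ∀ g : S → ℂ, ∃! h : S → ℂ, ∀ x, g x = h x - lam * ∑ y, (p x y : ℂ) * h y := by
  intro g
  set L : (S → ℂ) →ₗ[ℂ] (S → ℂ) :=
    { toFun := fun h x => h x - lam * ∑ y, (p x y : ℂ) * h y
      map_add' := by
        intro a b; funext x
        simp only [Pi.add_apply]
        rw [show (∑ y, (p x y : ℂ) * (a y + b y)) = (∑ y, (p x y : ℂ) * a y) + ∑ y, (p x y : ℂ) * b y by
          rw [← Finset.sum_add_distrib]; exact Finset.sum_congr rfl fun y _ => by ring]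
        ring
      map_smul' := by
        intro m a; funext x
        simp only [Pi.smul_apply, smul_eq_mul, RingHom.id_apply]
        rw [show (∑ y, (p x y : ℂ) * (m * a y)) = m * ∑ y, (p x y : ℂ) * a y by
          rw [Finset.mul_sum]; exact Finset.sum_congr rfl fun y _ => by ring]
        ring } with hL
  have hinj : Function.Injective L := by
    rw [← LinearMap.ker_eq_bot, LinearMap.ker_eq_bot']
    intro h hh
    apply core' p hp hrow hprim lam hlam hne
    intro x
    have := congrFun hh x
    simp only [hL, LinearMap.coe_mk, AddHom.coe_mk, Pi.zero_apply] at this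
    linear_combination this
  have hsurj : Function.Surjective L := (LinearMap.injective_iff_surjective).mp hinj
  obtain ⟨h, hh⟩ := hsurj g
  refine ⟨h, fun x => ?_, fun h' hh' => ?_⟩
  · have := congrFun hh x
    simp only [hL, LinearMap.coe_mk, AddHom.coe_mk] at this
    rw [← this]
  · apply hinj
    rw [hh]
    funext x
    simp only [hL, LinearMap.coe_mk, AddHom.coe_mk]
    exact (hh' x).symm
end

section
/- Let (X_n) be a stationary finite-state Markov chain, λ ∈ ℂ with |λ| = 1, g = f − ∫f dπ, and suppose f = ∫f dπ + h − λPh for some h with P*Ph = h. Then almost surely, for every N, |Σ_{i=1}^N λ^i (f(X_i) − ∫f dπ)| ≤ 2‖h‖_∞. -/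
open scoped BigOperators
open MeasureTheory

lemma harmonic_eq {S : Type*} [Fintype S]
    (p : S → S → ℝ) (π : S → ℝ) (h : S → ℂ)
    (hp : ∀ x y, 0 ≤ p x y) (hrow : ∀ x, ∑ y, p x y = 1)
    (hπpos : ∀ x, 0 < π x)
    (hinv : ∀ y, ∑ x, π x * p x y = π y)
    (hfix : ∀ x, (∑ y, ((p y x * π y / π x : ℝ) : ℂ) * ∑ z, (p y z : ℂ) * h z) = h x) :
    ∀ x y, p x y ≠ 0 → h y = ∑ z, (p x z : ℂ) * h z := by
  set Ph : S → ℂ := fun x => ∑ z, (p x z : ℂ) * h z with hPh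
  -- A = B
  have hAB : ∑ x, π x * Complex.normSq (h x) = ∑ x, π x * Complex.normSq (Ph x) := by
    have step : ∀ x, π x * Complex.normSq (h x)
        = ∑ y, (p y x * π y) * (Ph y * (starRingEnd ℂ) (h x)).re := by
      intro x
      have : Complex.normSq (h x) = (h x * (starRingEnd ℂ) (h x)).re := by
        rw [Complex.mul_conj]; simp
      rw [this]
      nth_rewrite 1 [← hfix x]
      rw [Finset.sum_mul, Complex.re_sum, Finset.mul_sum]
      refine Finset.sum_congr rfl fun y _ => ?_
      rw [mul_assoc, Complex.re_ofReal_mul]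
      have hπx := (hπpos x).ne'
      rw [hPh]
      field_simp
    calc ∑ x, π x * Complex.normSq (h x)
        = ∑ x, ∑ y, (p y x * π y) * (Ph y * (starRingEnd ℂ) (h x)).re := by
          exact Finset.sum_congr rfl fun x _ => step x
      _ = ∑ y, ∑ x, (p y x * π y) * (Ph y * (starRingEnd ℂ) (h x)).re := Finset.sum_comm
      _ = ∑ y, π y * Complex.normSq (Ph y) := by
          refine Finset.sum_congr rfl fun y _ => ?_
          have : ∑ x, (p y x * π y) * (Ph y * (starRingEnd ℂ) (h x)).re
              = π y * (Ph y * (starRingEnd ℂ) (Ph y)).re := by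
            rw [hPh]
            simp only [map_sum, Finset.mul_sum, Complex.re_sum]
            refine Finset.sum_congr rfl fun x _ => ?_
            rw [map_mul, Complex.conj_ofReal]
            rw [show (Ph y * ((p y x : ℂ) * (starRingEnd ℂ) (h x))) = (p y x : ℂ) * (Ph y * (starRingEnd ℂ) (h x)) by ring]
            rw [Complex.re_ofReal_mul]
            ring
          rw [this, Complex.mul_conj]
          simp
  -- total sum is zero
  have hzero : ∑ x, ∑ y, π x * p x y * Complex.normSq (h y - Ph x) = 0 := by
    have expand : ∀ x y, π x * p x y * Complex.normSq (h y - Ph x)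
        = π x * p x y * Complex.normSq (h y) + π x * p x y * Complex.normSq (Ph x)
          - 2 * (π x * p x y * (h y * (starRingEnd ℂ) (Ph x)).re) := by
      intro x y; rw [Complex.normSq_sub]; ring
    have T1 : ∑ x, ∑ y, π x * p x y * Complex.normSq (h y)
        = ∑ x, π x * Complex.normSq (h x) := by
      rw [Finset.sum_comm]
      refine Finset.sum_congr rfl fun y _ => ?_
      rw [← Finset.sum_mul]
      rw [hinv y]
    have T3 : ∀ x, ∑ y, π x * p x y * Complex.normSq (Ph x) = π x * Complex.normSq (Ph x) := by
      intro x
      rw [← Finset.sum_mul, ← Finset.mul_sum, hrow x, mul_one]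
    have T2 : ∀ x, ∑ y, π x * p x y * (h y * (starRingEnd ℂ) (Ph x)).re
        = π x * Complex.normSq (Ph x) := by
      intro x
      have : ∑ y, p x y * (h y * (starRingEnd ℂ) (Ph x)).re
          = (Ph x * (starRingEnd ℂ) (Ph x)).re := by
        rw [hPh]
        simp only [Finset.sum_mul, Complex.re_sum]
        refine Finset.sum_congr rfl fun y _ => ?_
        rw [← Complex.re_ofReal_mul]
        ring_nf
      calc ∑ y, π x * p x y * (h y * (starRingEnd ℂ) (Ph x)).re
          = π x * ∑ y, p x y * (h y * (starRingEnd ℂ) (Ph x)).re := by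
            rw [Finset.mul_sum]; refine Finset.sum_congr rfl fun y _ => by ring
        _ = π x * (Ph x * (starRingEnd ℂ) (Ph x)).re := by rw [this]
        _ = π x * Complex.normSq (Ph x) := by rw [Complex.mul_conj]; simp
    calc ∑ x, ∑ y, π x * p x y * Complex.normSq (h y - Ph x)
        = ∑ x, ∑ y, (π x * p x y * Complex.normSq (h y) + π x * p x y * Complex.normSq (Ph x)
          - 2 * (π x * p x y * (h y * (starRingEnd ℂ) (Ph x)).re)) := by
          exact Finset.sum_congr rfl fun x _ => Finset.sum_congr rfl fun y _ => expand x y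
      _ = (∑ x, ∑ y, π x * p x y * Complex.normSq (h y))
          + (∑ x, ∑ y, π x * p x y * Complex.normSq (Ph x))
          - 2 * ∑ x, ∑ y, π x * p x y * (h y * (starRingEnd ℂ) (Ph x)).re := by
          simp [Finset.sum_sub_distrib, Finset.sum_add_distrib, Finset.mul_sum]
      _ = 0 := by
          rw [T1]
          rw [Finset.sum_congr rfl fun x _ => T3 x]
          rw [Finset.sum_congr rfl fun x _ => T2 x]
          rw [hAB]; ring
  -- conclude
  intro x y hxy
  have hnonneg : ∀ a ∈ (Finset.univ : Finset S), (0:ℝ) ≤ ∑ b, π a * p a b * Complex.normSq (h b - Ph a) :=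
    fun a _ => Finset.sum_nonneg fun b _ => mul_nonneg (mul_nonneg (hπpos a).le (hp a b)) (Complex.normSq_nonneg _)
  have hx0 : ∑ b, π x * p x b * Complex.normSq (h b - Ph x) = 0 := by
    have := (Finset.sum_eq_zero_iff_of_nonneg hnonneg).mp hzero x (Finset.mem_univ x)
    exact this
  have hterm : π x * p x y * Complex.normSq (h y - Ph x) = 0 := by
    have := (Finset.sum_eq_zero_iff_of_nonneg (fun b _ => mul_nonneg (mul_nonneg (hπpos x).le (hp x b)) (Complex.normSq_nonneg _))).mp hx0 y (Finset.mem_univ y)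
    exact this
  have : Complex.normSq (h y - Ph x) = 0 := by
    rcases mul_eq_zero.mp hterm with h1 | h2
    · rcases mul_eq_zero.mp h1 with h3 | h4
      · exact absurd h3 (ne_of_gt (hπpos x))
      · exact absurd h4 hxy
    · exact h2
  have := Complex.normSq_eq_zero.mp this
  exact sub_eq_zero.mp this

/-- For a stationary finite-state Markov chain, `λ` with `|λ| = 1`, and `f` satisfying
the coboundary equation `f = ∫f dπ + h − λPh` with `P*Ph = h`, almost surely
`|Σ_{i=1}^N λ^i (f(X_i) − ∫f dπ)| ≤ 2‖h‖_∞` for every `N`. -/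
theorem stmt16 {S : Type*} [Fintype S] [Nonempty S]
    [MeasurableSpace S] [MeasurableSingletonClass S]
    {Ω : Type*} [MeasurableSpace Ω] (μ : Measure Ω) [IsProbabilityMeasure μ]
    (X : ℕ → Ω → S) (hX : ∀ n, Measurable (X n))
    (p : S → S → ℝ) (π : S → ℝ)
    (hp : ∀ x y, 0 ≤ p x y) (hrow : ∀ x, ∑ y, p x y = 1)
    (hπpos : ∀ x, 0 < π x) (hπ : ∑ x, π x = 1)
    (hinv : ∀ y, ∑ x, π x * p x y = π y)
    (hmarkov : ∀ (n : ℕ) (x : ℕ → S), 1 ≤ n →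
      μ {ω | ∀ i ∈ Finset.Icc 1 n, X i ω = x i}
        = ENNReal.ofReal (π (x 1) * ∏ i ∈ Finset.Ico 1 n, p (x i) (x (i + 1))))
    (lam : ℂ) (hlam : ‖lam‖ = 1)
    (f h : S → ℂ) (D : ℂ) (hD : D = ∑ x, f x * ((π x : ℝ) : ℂ))
    (hcob : ∀ x, f x = D + h x - lam * ∑ y, (p x y : ℂ) * h y)
    (hfix : ∀ x, (∑ y, ((p y x * π y / π x : ℝ) : ℂ) * ∑ z, (p y z : ℂ) * h z) = h x) :
    ∀ᵐ ω ∂μ, ∀ N : ℕ, 1 ≤ N →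
      ‖∑ i ∈ Finset.Icc 1 N, lam ^ i * (f (X i ω) - D)‖ ≤ 2 * ⨆ x : S, ‖h x‖ := by
  classical
  have hkey := harmonic_eq p π h hp hrow hπpos hinv hfix
  -- null sets: impossible transitions
  have hnull : ∀ n : ℕ, 1 ≤ n → ∀ a b : S, p a b = 0 →
      μ {ω | X n ω = a ∧ X (n+1) ω = b} = 0 := by
    intro n hn a b hab
    set xc : (Fin (n+1) → S) → ℕ → S :=
      fun c i => c ⟨min (i-1) n, by omega⟩ with hxc
    have hsub : {ω | X n ω = a ∧ X (n+1) ω = b} ⊆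
        ⋃ c : {c : Fin (n+1) → S // c ⟨min (n-1) n, by omega⟩ = a ∧
            c ⟨min n n, by omega⟩ = b},
          {ω | ∀ i ∈ Finset.Icc 1 (n+1), X i ω = xc c.1 i} := by
      intro ω hω
      refine Set.mem_iUnion.mpr ?_
      have key : ∀ i, 1 ≤ i → i ≤ n + 1 →
          (fun j : Fin (n+1) => X (j.1+1) ω) ⟨min (i-1) n, by omega⟩
            = X i ω := by
        intro i h1 h2
        simp only
        congr 1
        omega
      refine ⟨⟨fun j => X (j.1+1) ω, ?_, ?_⟩, ?_⟩
      · rw [key n hn (by omega)]; exact hω.1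
      · have := key (n+1) (by omega) (le_refl _)
        simpa using this ▸ hω.2
      · intro i hi
        rw [Finset.mem_Icc] at hi
        exact (key i hi.1 hi.2).symm
    refine measure_mono_null hsub (measure_iUnion_null fun c => ?_)
    rw [hmarkov (n+1) (xc c.1) (by omega)]
    have hzero : ∏ i ∈ Finset.Ico 1 (n+1), p (xc c.1 i) (xc c.1 (i+1)) = 0 := by
      refine Finset.prod_eq_zero (i := n) (Finset.mem_Ico.mpr ⟨hn, by omega⟩) ?_
      have h1 : xc c.1 n = a := by
        show c.1 ⟨min (n-1) n, _⟩ = a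
        exact c.2.1
      have h2 : xc c.1 (n+1) = b := by
        show c.1 ⟨min (n+1-1) n, _⟩ = b
        have : min (n+1-1) n = min n n := by omega
        simp only [this]
        exact c.2.2
      rw [h1, h2, hab]
    rw [hzero, mul_zero, ENNReal.ofReal_zero]
  -- a.e. good transitions
  have hgood : ∀ᵐ ω ∂μ, ∀ n : ℕ, 1 ≤ n → p (X n ω) (X (n+1) ω) ≠ 0 := by
    rw [ae_all_iff]
    intro n
    by_cases hn : 1 ≤ n
    · rw [ae_iff]
      refine measure_mono_null (fun ω hω => ?_)
          (measure_iUnion_null (ι := {q : S × S // p q.1 q.2 = 0})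
            (s := fun q => {ω | X n ω = q.1.1 ∧ X (n+1) ω = q.1.2})
            fun q => hnull n hn q.1.1 q.1.2 q.2)
      simp only [Set.mem_setOf_eq, not_forall, not_not] at hω
      obtain ⟨-, hpz⟩ := hω
      exact Set.mem_iUnion.mpr ⟨⟨(X n ω, X (n+1) ω), hpz⟩, rfl, rfl⟩
    · filter_upwards with ω h1 using absurd h1 hn
  filter_upwards [hgood] with ω hω
  intro N hN
  set G : ℕ → ℂ := fun i => lam ^ i * h (X i ω) with hG
  have hstep : ∀ i : ℕ, 1 ≤ i → lam ^ i * (f (X i ω) - D) = G i - G (i+1) := by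
    intro i hi
    have hPh : (∑ y, (p (X i ω) y : ℂ) * h y) = h (X (i+1) ω) :=
      (hkey (X i ω) (X (i+1) ω) (hω i hi)).symm
    rw [hcob (X i ω)]
    rw [hG]
    simp only []
    rw [← hPh]
    ring
  have htel : ∀ N : ℕ, 1 ≤ N →
      ∑ i ∈ Finset.Icc 1 N, lam ^ i * (f (X i ω) - D) = G 1 - G (N+1) := by
    intro N hN
    induction N with
    | zero => omega
    | succ M ih =>
      by_cases hM : 1 ≤ M
      · rw [Finset.sum_Icc_succ_top (by omega), ih hM, hstep (M+1) (by omega)]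
        ring
      · have : M = 0 := by omega
        subst this
        simpa using hstep 1 le_rfl
  rw [htel N hN]
  have hM : BddAbove (Set.range fun x : S => ‖h x‖) := Set.Finite.bddAbove (Set.finite_range _)
  have hnorm : ∀ i : ℕ, ‖G i‖ ≤ ⨆ x : S, ‖h x‖ := by
    intro i
    rw [hG]
    simp only [norm_mul, norm_pow, hlam, one_pow, one_mul]
    exact le_ciSup hM (X i ω)
  calc ‖G 1 - G (N+1)‖ ≤ ‖G 1‖ + ‖G (N+1)‖ := norm_sub_le _ _
    _ ≤ (⨆ x : S, ‖h x‖) + ⨆ x : S, ‖h x‖ := add_le_add (hnorm 1) (hnorm (N+1))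
    _ = 2 * ⨆ x : S, ‖h x‖ := by ring
end
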